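/- Let p be a prime of the form p = 8q + 5 with q > 0. Then there exist nonnegative integers lambda and mu with lambda + mu = q such that the set R^{(4)}_p of quartic residues is a (p, (p-1)/4, lambda, mu)-Gaussian difference set for Z_p, and R^{(4)}_p union {0} is a (p, (p+3)/4, lambda + 1, mu)-Gaussian difference set for Z_p. -/

import Mathlib

/-- The set `R⁽²⁾_p = { z² : z ∈ (ZMod p)* }` of quadratic residues mod `p`. -/
def quadRes (p : ℕ) : Set (ZMod p) := {x | ∃ z : ZMod p, z ≠ 0 ∧ z ^ 2 = x}

/-- The set `R⁽⁴⁾_p = { z⁴ : z ∈ (ZMod p)* }` of quartic residues mod `p`. -/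
def quartRes (p : ℕ) : Set (ZMod p) := {x | ∃ z : ZMod p, z ≠ 0 ∧ z ^ 4 = x}

/-- `diffCountSet S x` is the number of ways to write `x = a - b` with `a ≠ b` distinct
elements of `S`. -/
noncomputable def diffCountSet {G : Type*} [AddCommGroup G] (S : Set G) (x : G) : ℕ :=
  Nat.card {q : G × G // q.1 ∈ S ∧ q.2 ∈ S ∧ q.1 ≠ q.2 ∧ q.1 - q.2 = x}

/-- `S` is a `(p, |S|, λ, μ)`-Gaussian difference set for `ZMod p`: every nonzero element
of `R⁽²⁾_p ∪ {0}` is a difference of distinct elements of `S` in exactly `λ` ways, and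
every element outside `R⁽²⁾_p ∪ {0}` in exactly `μ` ways. -/
def IsGaussianDS (p : ℕ) (S : Set (ZMod p)) (lam mu : ℕ) : Prop :=
  (∀ x ∈ insert (0 : ZMod p) (quadRes p), x ≠ 0 → diffCountSet S x = lam) ∧
  (∀ x : ZMod p, x ∉ insert (0 : ZMod p) (quadRes p) → diffCountSet S x = mu)

section Aux
variable {p : ℕ} [Fact p.Prime]


lemma zero_not_quart : (0 : ZMod p) ∉ quartRes p := by
  rintro ⟨z, hz, h⟩; exact hz (pow_eq_zero_iff (by norm_num) |>.mp h)

lemma zero_not_quad : (0 : ZMod p) ∉ quadRes p := by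
  rintro ⟨z, hz, h⟩; exact hz (pow_eq_zero_iff (by norm_num) |>.mp h)

lemma quart_mul {x y : ZMod p} (hx : x ∈ quartRes p) (hy : y ∈ quartRes p) :
    x * y ∈ quartRes p := by
  obtain ⟨z, hz, rfl⟩ := hx; obtain ⟨w, hw, rfl⟩ := hy
  exact ⟨z * w, mul_ne_zero hz hw, by ring⟩

lemma quart_inv {x : ZMod p} (hx : x ∈ quartRes p) : x⁻¹ ∈ quartRes p := by
  obtain ⟨z, hz, rfl⟩ := hx
  exact ⟨z⁻¹, inv_ne_zero hz, by rw [inv_pow]⟩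

lemma quart_ne_zero {x : ZMod p} (hx : x ∈ quartRes p) : x ≠ 0 := by
  rintro rfl; exact zero_not_quart hx

lemma quart_sub_quad : quartRes p ⊆ quadRes p := by
  rintro x ⟨z, hz, rfl⟩; exact ⟨z ^ 2, pow_ne_zero 2 hz, by ring⟩

lemma mem_quadRes_iff {x : ZMod p} : x ∈ quadRes p ↔ x ≠ 0 ∧ IsSquare x := by
  constructor
  · rintro ⟨z, hz, rfl⟩
    exact ⟨pow_ne_zero 2 hz, ⟨z, by ring⟩⟩
  · rintro ⟨hx, r, rfl⟩
    exact ⟨r, fun h => hx (by rw [h]; ring), by ring⟩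



lemma neg_one_ne_one' (h5 : p % 8 = 5) : (-1 : ZMod p) ≠ 1 := by
  haveI : Fact (2 < p) := ⟨by have := (Fact.out : p.Prime).two_le; omega⟩
  exact ZMod.neg_one_ne_one

lemma neg_one_not_quart (h5 : p % 8 = 5) : (-1 : ZMod p) ∉ quartRes p := by
  rintro ⟨z, hz, hz4⟩
  have h8 : z ^ 8 = 1 := by
    have : z ^ 8 = (z ^ 4) ^ 2 := by ring
    rw [this, hz4]; ring
  have hp1 : z ^ (p - 1) = 1 := ZMod.pow_card_sub_one_eq_one hz
  have hd8 : orderOf z ∣ 8 := orderOf_dvd_of_pow_eq_one h8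
  have hdp : orderOf z ∣ (p - 1) := orderOf_dvd_of_pow_eq_one hp1
  have hgcd : Nat.gcd 8 (p - 1) = 4 := by
    have h4 : (p - 1) % 8 = 4 := by omega
    rw [Nat.gcd_rec 8 (p-1), h4]; decide
  have h4 : orderOf z ∣ 4 := hgcd ▸ Nat.dvd_gcd hd8 hdp
  have : z ^ 4 = 1 := orderOf_dvd_iff_pow_eq_one.mp h4
  exact neg_one_ne_one' h5 (hz4 ▸ this)

lemma exists_i (h5 : p % 8 = 5) : ∃ c : ZMod p, c * c = -1 := by
  have : IsSquare (-1 : ZMod p) := (ZMod.exists_sq_eq_neg_one_iff).mpr (by omega)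
  obtain ⟨c, hc⟩ := this
  exact ⟨c, hc.symm⟩

lemma nonsquare_mul_nonsquare {a b : ZMod p} (ha : a ≠ 0) (hb : b ≠ 0)
    (hsa : ¬ IsSquare a) (hsb : ¬ IsSquare b) : IsSquare (a * b) := by
  have h1 : quadraticChar (ZMod p) a = -1 := quadraticChar_neg_one_iff_not_isSquare.mpr hsa
  have h2 : quadraticChar (ZMod p) b = -1 := quadraticChar_neg_one_iff_not_isSquare.mpr hsb
  have : quadraticChar (ZMod p) (a * b) = 1 := by rw [map_mul, h1, h2]; ring
  exact (quadraticChar_one_iff_isSquare (mul_ne_zero ha hb)).mp this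

lemma sq_mem_or_neg (h5 : p % 8 = 5) {x : ZMod p} (hx : x ≠ 0) (hs : IsSquare x) :
    x ∈ quartRes p ∨ -x ∈ quartRes p := by
  obtain ⟨s, rfl⟩ := hs
  have hs0 : s ≠ 0 := fun h => hx (by rw [h]; ring)
  by_cases hss : IsSquare s
  · obtain ⟨v, rfl⟩ := hss
    left
    exact ⟨v, fun h => hs0 (by rw [h]; ring), by ring⟩
  · obtain ⟨c, hc⟩ := exists_i h5
    have hc0 : c ≠ 0 := by
      intro h
      have : (-1 : ZMod p) = 0 := by rw [← hc, h]; ring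
      simpa using this
    have hcs : ¬ IsSquare c := fun ⟨d, hd⟩ => by
      refine neg_one_not_quart h5 ⟨d, fun h => hc0 (by rw [hd, h]; ring), ?_⟩
      rw [← hc, hd]; ring
    obtain ⟨w, hw⟩ := nonsquare_mul_nonsquare hc0 hs0 hcs hss
    right
    refine ⟨w, fun h => ?_, ?_⟩
    · rw [h] at hw
      simp only [mul_zero] at hw
      exact (mul_ne_zero hc0 hs0) hw
    · have h1 : w ^ 4 = (c * s) * (c * s) := by rw [hw]; ring
      rw [h1]; linear_combination (s*s) * hc

lemma not_both_quart (h5 : p % 8 = 5) {x : ZMod p} (hx : x ∈ quartRes p) :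
    -x ∈ quartRes p → False := by
  intro hnx
  have h0 : x ≠ 0 := quart_ne_zero hx
  have hm := quart_mul hnx (quart_inv hx)
  have : (-x) * x⁻¹ = -1 := by
    rw [neg_mul, mul_inv_cancel₀ h0]
  rw [this] at hm
  exact neg_one_not_quart h5 hm

lemma neg_quart_mem_quad (h5 : p % 8 = 5) {x : ZMod p} (hx : x ∈ quartRes p) :
    -x ∈ quadRes p := by
  obtain ⟨c, hc⟩ := exists_i h5
  obtain ⟨z, hz, rfl⟩ := hx
  have hc0 : c ≠ 0 := by
    intro h
    have : (-1 : ZMod p) = 0 := by rw [← hc, h]; ring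
    simpa using this
  refine ⟨c * z ^ 2, mul_ne_zero hc0 (pow_ne_zero 2 hz), ?_⟩
  linear_combination (z^4) * hc

lemma diffCount_neg {G : Type*} [AddCommGroup G] (S : Set G) (x : G) :
    diffCountSet S (-x) = diffCountSet S x := by
  apply Nat.card_congr
  refine Equiv.subtypeEquiv (Equiv.prodComm G G) fun q => ?_
  simp only [Equiv.prodComm_apply, Prod.fst_swap, Prod.snd_swap]
  constructor
  · rintro ⟨h1, h2, h3, h4⟩
    exact ⟨h2, h1, h3.symm, by rw [← neg_sub, h4, neg_neg]⟩
  · rintro ⟨h1, h2, h3, h4⟩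
    exact ⟨h2, h1, h3.symm, by rw [← neg_sub, h4]⟩

lemma diffCount_scale {t : ZMod p} (ht : t ≠ 0) {S : Set (ZMod p)}
    (hS : ∀ s, s ∈ S ↔ t * s ∈ S) (x : ZMod p) :
    diffCountSet S (t * x) = diffCountSet S x := by
  refine (Nat.card_congr ?_).symm
  refine Equiv.subtypeEquiv
    (Equiv.prodCongr (Equiv.mulLeft₀ t ht) (Equiv.mulLeft₀ t ht)) fun q => ?_
  simp only [Equiv.prodCongr_apply, Prod.map_fst, Prod.map_snd, Equiv.mulLeft₀_apply]
  constructor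
  · rintro ⟨h1, h2, h3, h4⟩
    refine ⟨(hS _).mp h1, (hS _).mp h2, fun h => h3 (mul_left_cancel₀ ht h), ?_⟩
    rw [← mul_sub, h4]
  · rintro ⟨h1, h2, h3, h4⟩
    refine ⟨(hS _).mpr h1, (hS _).mpr h2, fun h => h3 (by rw [h]), ?_⟩
    have : t * (q.1 - q.2) = t * x := by rw [mul_sub]; exact h4
    exact mul_left_cancel₀ ht this

lemma key_eq (h5 : p % 8 = 5) {x y : ZMod p} (hx : x ≠ 0) (hy : y ≠ 0)
    (hr : IsSquare (y * x⁻¹)) :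
    diffCountSet (quartRes p) y = diffCountSet (quartRes p) x := by
  set t := y * x⁻¹ with htdef
  have ht0 : t ≠ 0 := mul_ne_zero hy (inv_ne_zero hx)
  have hyx : y = t * x := by
    rw [htdef, mul_assoc, inv_mul_cancel₀ hx, mul_one]
  have hSc : ∀ u : ZMod p, u ∈ quartRes p → ∀ s, s ∈ quartRes p ↔ u * s ∈ quartRes p := by
    intro u hu s
    constructor
    · exact fun h => quart_mul hu h
    · intro h
      have := quart_mul (quart_inv hu) h
      rwa [← mul_assoc, inv_mul_cancel₀ (quart_ne_zero hu), one_mul] at this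
  rcases sq_mem_or_neg h5 ht0 hr with h | h
  · rw [hyx]
    exact diffCount_scale ht0 (hSc t h) x
  · have : y = -((-t) * x) := by rw [hyx]; ring
    rw [this, diffCount_neg]
    exact diffCount_scale (neg_ne_zero.mpr ht0) (hSc (-t) h) x

noncomputable def resF (p : ℕ) [Fact p.Prime] (S : Set (ZMod p)) : Finset (ZMod p) := by
  classical exact Finset.univ.filter (· ∈ S)

@[simp] lemma mem_resF {S : Set (ZMod p)} {x : ZMod p} : x ∈ resF p S ↔ x ∈ S := by
  simp [resF]

noncomputable def pairsF (p : ℕ) [Fact p.Prime] (S : Set (ZMod p)) (x : ZMod p) :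
    Finset (ZMod p × ZMod p) := by
  classical exact Finset.univ.filter fun q => q.1 ∈ S ∧ q.2 ∈ S ∧ q.1 ≠ q.2 ∧ q.1 - q.2 = x

@[simp] lemma mem_pairsF {S : Set (ZMod p)} {x : ZMod p} {q : ZMod p × ZMod p} :
    q ∈ pairsF p S x ↔ (q.1 ∈ S ∧ q.2 ∈ S ∧ q.1 ≠ q.2 ∧ q.1 - q.2 = x) := by
  simp [pairsF]

lemma diffCount_eq_pairsF (S : Set (ZMod p)) (x : ZMod p) :
    diffCountSet S x = (pairsF p S x).card := by
  classical
  rw [diffCountSet, Nat.card_eq_fintype_card, Fintype.card_subtype]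
  congr 1

lemma pairsF_zero (S : Set (ZMod p)) : pairsF p S 0 = ∅ := by
  ext q
  simp only [mem_pairsF, Finset.notMem_empty, iff_false, not_and]
  intro _ _ h3 h4
  exact h3 (sub_eq_zero.mp h4)

lemma ne_neg_self (h5 : p % 8 = 5) {a : ZMod p} (ha : a ≠ 0) : a ≠ -a := by
  intro h
  have : a * 1 = a * (-1) := by rw [mul_one, mul_neg_one]; exact h
  exact neg_one_ne_one' h5 ((mul_left_cancel₀ ha this).symm)

lemma fiber4_card (h5 : p % 8 = 5) {x : ZMod p} (hx : x ∈ quartRes p) :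
    ((Finset.univ.erase (0 : ZMod p)).filter (fun z => z ^ 4 = x)).card = 4 := by
  classical
  obtain ⟨z₀, hz₀, rfl⟩ := hx
  obtain ⟨c, hc⟩ := exists_i h5
  have hc0 : c ≠ 0 := by
    intro h
    have : (-1 : ZMod p) = 0 := by rw [← hc, h]; ring
    simpa using this
  have hc1 : c ≠ 1 := by
    intro h
    rw [h] at hc
    exact neg_one_ne_one' h5 (by linear_combination -hc)
  have hcm1 : c ≠ -1 := by
    intro h
    rw [h] at hc
    exact neg_one_ne_one' h5 (by linear_combination -hc)
  have heq : (Finset.univ.erase (0 : ZMod p)).filter (fun z => z ^ 4 = z₀ ^ 4)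
      = {z₀, -z₀, c * z₀, -(c * z₀)} := by
    ext z
    simp only [Finset.mem_filter, Finset.mem_erase, Finset.mem_univ, true_and,
      Finset.mem_insert, Finset.mem_singleton, and_true]
    constructor
    · rintro ⟨hz, hz4⟩
      have hprod : (z - z₀) * (z + z₀) * ((z - c * z₀) * (z + c * z₀)) = 0 := by
        linear_combination hz4 - (z ^ 2 - z₀ ^ 2) * z₀ ^ 2 * hc
      rcases mul_eq_zero.mp hprod with h | h
      · rcases mul_eq_zero.mp h with h | h
        · exact Or.inl (sub_eq_zero.mp h)
        · exact Or.inr (Or.inl (eq_neg_of_add_eq_zero_left h))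
      · rcases mul_eq_zero.mp h with h | h
        · exact Or.inr (Or.inr (Or.inl (sub_eq_zero.mp h)))
        · exact Or.inr (Or.inr (Or.inr (eq_neg_of_add_eq_zero_left h)))
    · rintro (rfl | rfl | rfl | rfl)
      · exact ⟨hz₀, rfl⟩
      · exact ⟨neg_ne_zero.mpr hz₀, by ring⟩
      · exact ⟨mul_ne_zero hc0 hz₀, by linear_combination (z₀ ^ 4) * (c * c - 1) * hc⟩
      · refine ⟨neg_ne_zero.mpr (mul_ne_zero hc0 hz₀), ?_⟩
        linear_combination (z₀ ^ 4) * (c * c - 1) * hc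
  rw [heq]
  have h1 : z₀ ≠ -z₀ := ne_neg_self h5 hz₀
  have h2 : z₀ ≠ c * z₀ := fun h => hc1 (mul_right_cancel₀ hz₀ (by rw [← h, one_mul])).symm
  have h3 : z₀ ≠ -(c * z₀) := fun h => hcm1 (by
    have h' : (-1 : ZMod p) * z₀ = c * z₀ := by rw [neg_one_mul]; linear_combination -h
    exact (mul_right_cancel₀ hz₀ h').symm)
  have h4 : -z₀ ≠ c * z₀ := fun h => hcm1 (by
    have : (-1 : ZMod p) * z₀ = c * z₀ := by rw [neg_one_mul]; exact h
    exact (mul_right_cancel₀ hz₀ this).symm)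
  have h5' : -z₀ ≠ -(c * z₀) := fun h => h2 (neg_injective h)
  have h6 : c * z₀ ≠ -(c * z₀) := ne_neg_self h5 (mul_ne_zero hc0 hz₀)
  rw [Finset.card_insert_of_notMem (by simp [h1, h2, h3]),
    Finset.card_insert_of_notMem (by simp [h4, h5']),
    Finset.card_insert_of_notMem (by simp [h6]), Finset.card_singleton]

lemma fiber2_card (h5 : p % 8 = 5) {x : ZMod p} (hx : x ∈ quadRes p) :
    ((Finset.univ.erase (0 : ZMod p)).filter (fun z => z ^ 2 = x)).card = 2 := by
  classical
  obtain ⟨z₀, hz₀, rfl⟩ := hx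
  have heq : (Finset.univ.erase (0 : ZMod p)).filter (fun z => z ^ 2 = z₀ ^ 2)
      = {z₀, -z₀} := by
    ext z
    simp only [Finset.mem_filter, Finset.mem_erase, Finset.mem_univ, true_and,
      Finset.mem_insert, Finset.mem_singleton, and_true]
    constructor
    · rintro ⟨hz, hz2⟩
      have hprod : (z - z₀) * (z + z₀) = 0 := by linear_combination hz2
      rcases mul_eq_zero.mp hprod with h | h
      · exact Or.inl (sub_eq_zero.mp h)
      · exact Or.inr (eq_neg_of_add_eq_zero_left h)
    · rintro (rfl | rfl)
      · exact ⟨hz₀, rfl⟩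
      · exact ⟨neg_ne_zero.mpr hz₀, by ring⟩
  rw [heq, Finset.card_insert_of_notMem (by simp [ne_neg_self h5 hz₀]),
    Finset.card_singleton]

lemma card_resF_quart (h5 : p % 8 = 5) : (resF p (quartRes p)).card * 4 = p - 1 := by
  classical
  have hmap : ∀ z ∈ Finset.univ.erase (0 : ZMod p), z ^ 4 ∈ resF p (quartRes p) := by
    intro z hz
    rw [mem_resF]
    exact ⟨z, (Finset.mem_erase.mp hz).1, rfl⟩
  have key := Finset.card_eq_sum_card_fiberwise hmap
  rw [Finset.card_erase_of_mem (Finset.mem_univ 0), Finset.card_univ, ZMod.card] at key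
  rw [Finset.sum_congr rfl (fun x hx => fiber4_card h5 (mem_resF.mp hx))] at key
  rw [Finset.sum_const, smul_eq_mul] at key
  omega

lemma card_resF_quad (h5 : p % 8 = 5) : (resF p (quadRes p)).card * 2 = p - 1 := by
  classical
  have hmap : ∀ z ∈ Finset.univ.erase (0 : ZMod p), z ^ 2 ∈ resF p (quadRes p) := by
    intro z hz
    rw [mem_resF]
    exact ⟨z, (Finset.mem_erase.mp hz).1, rfl⟩
  have key := Finset.card_eq_sum_card_fiberwise hmap
  rw [Finset.card_erase_of_mem (Finset.mem_univ 0), Finset.card_univ, ZMod.card] at key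
  rw [Finset.sum_congr rfl (fun x hx => fiber2_card h5 (mem_resF.mp hx))] at key
  rw [Finset.sum_const, smul_eq_mul] at key
  omega

lemma pairsF_insert_of_mem (h5 : p % 8 = 5) {x : ZMod p} (hx : x ∈ quartRes p) :
    pairsF p (insert 0 (quartRes p)) x = insert (x, (0 : ZMod p)) (pairsF p (quartRes p) x) := by
  have hx0 : x ≠ 0 := quart_ne_zero hx
  have hnx : -x ∉ quartRes p := fun h => not_both_quart h5 hx h
  ext q
  simp only [mem_pairsF, Set.mem_insert_iff, Finset.mem_insert]
  constructor
  · rintro ⟨h1, h2, h3, h4⟩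
    rcases h2 with h2 | h2
    · left
      have hq1 : q.1 = x := by rw [h2, sub_zero] at h4; exact h4
      exact Prod.ext hq1 h2
    · rcases h1 with h1 | h1
      · exfalso
        apply hnx
        have hq2 : q.2 = -x := by rw [h1] at h4; linear_combination -h4
        rw [← hq2]; exact h2
      · exact Or.inr ⟨h1, h2, h3, h4⟩
  · rintro (rfl | ⟨h1, h2, h3, h4⟩)
    · exact ⟨Or.inr hx, Or.inl rfl, by simpa using hx0, by simp⟩
    · exact ⟨Or.inr h1, Or.inr h2, h3, h4⟩

lemma pairsF_insert_of_neg_mem (h5 : p % 8 = 5) {x : ZMod p} (hx : x ∉ quartRes p)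
    (hnx : -x ∈ quartRes p) :
    pairsF p (insert 0 (quartRes p)) x = insert ((0 : ZMod p), -x) (pairsF p (quartRes p) x) := by
  have hx0 : x ≠ 0 := fun h => quart_ne_zero hnx (by rw [h, neg_zero])
  ext q
  simp only [mem_pairsF, Set.mem_insert_iff, Finset.mem_insert]
  constructor
  · rintro ⟨h1, h2, h3, h4⟩
    rcases h1 with h1 | h1
    · left
      have hq2 : q.2 = -x := by rw [h1] at h4; linear_combination -h4
      exact Prod.ext h1 hq2
    · rcases h2 with h2 | h2
      · exfalso
        apply hx
        have hq1 : q.1 = x := by rw [h2, sub_zero] at h4; exact h4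
        rw [← hq1]; exact h1
      · exact Or.inr ⟨h1, h2, h3, h4⟩
  · rintro (rfl | ⟨h1, h2, h3, h4⟩)
    · refine ⟨Or.inl rfl, Or.inr hnx, ?_, by simp⟩
      simpa using (neg_ne_zero.mpr hx0).symm
    · exact ⟨Or.inr h1, Or.inr h2, h3, h4⟩

lemma pairsF_insert_of_not_mem {x : ZMod p} (hx0 : x ≠ 0) (hx : x ∉ quartRes p)
    (hnx : -x ∉ quartRes p) :
    pairsF p (insert 0 (quartRes p)) x = pairsF p (quartRes p) x := by
  ext q
  simp only [mem_pairsF, Set.mem_insert_iff]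
  constructor
  · rintro ⟨h1, h2, h3, h4⟩
    rcases h1 with h1 | h1
    · exfalso
      apply hnx
      have hq2 : q.2 = -x := by rw [h1] at h4; linear_combination -h4
      rcases h2 with h2 | h2
      · exact absurd (h1.trans h2.symm) h3
      · rw [← hq2]; exact h2
    · rcases h2 with h2 | h2
      · exfalso
        apply hx
        have hq1 : q.1 = x := by rw [h2, sub_zero] at h4; exact h4
        rw [← hq1]; exact h1
      · exact ⟨h1, h2, h3, h4⟩
  · rintro ⟨h1, h2, h3, h4⟩
    exact ⟨Or.inr h1, Or.inr h2, h3, h4⟩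

lemma xz_not_mem_pairs {x : ZMod p} : (x, (0 : ZMod p)) ∉ pairsF p (quartRes p) x := by
  rw [mem_pairsF]
  rintro ⟨-, h, -, -⟩
  exact zero_not_quart h

lemma zx_not_mem_pairs {x : ZMod p} : ((0 : ZMod p), -x) ∉ pairsF p (quartRes p) x := by
  rw [mem_pairsF]
  rintro ⟨h, -, -, -⟩
  exact zero_not_quart h

lemma sum_counts (h5 : p % 8 = 5) {lam mu : ℕ}
    (hlam : ∀ x ∈ quadRes p, diffCountSet (quartRes p) x = lam)
    (hmu : ∀ x : ZMod p, x ≠ 0 → x ∉ quadRes p → diffCountSet (quartRes p) x = mu) :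
    (resF p (quadRes p)).card * lam + (p - (resF p (quadRes p)).card - 1) * mu
      = (resF p (quartRes p)).card * (resF p (quartRes p)).card
          - (resF p (quartRes p)).card := by
  classical
  set T := resF p (quartRes p) with hT
  set Q := (resF p (quadRes p)).card with hQ
  set diag := (T ×ˢ T).filter (fun q => q.1 = q.2) with hdiagdef
  set bigP := (T ×ˢ T) \ diag with hbigP
  have hdiagset : diag = T.image (fun z => (z, z)) := by
    ext q
    simp only [hdiagdef, Finset.mem_filter, Finset.mem_product, Finset.mem_image]
    constructor
    · rintro ⟨⟨ha, hb⟩, he⟩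
      exact ⟨q.1, ha, Prod.ext rfl he⟩
    · rintro ⟨z, hz, rfl⟩
      exact ⟨⟨hz, hz⟩, rfl⟩
  have hdiag : diag.card = T.card := by
    rw [hdiagset]
    exact Finset.card_image_of_injective _ (fun a b h => (Prod.ext_iff.mp h).1)
  have hcardbigP : bigP.card = T.card * T.card - T.card := by
    rw [hbigP, Finset.card_sdiff_of_subset (Finset.filter_subset _ _), hdiag, Finset.card_product]
  have hfiber := Finset.card_eq_sum_card_fiberwise
    (s := bigP) (t := Finset.univ) (f := fun q => q.1 - q.2) (fun q _ => Finset.mem_univ _)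
  have hfibeq : ∀ x : ZMod p,
      bigP.filter (fun q => q.1 - q.2 = x) = pairsF p (quartRes p) x := by
    intro x
    ext q
    simp only [hbigP, hdiagdef, Finset.mem_filter, Finset.mem_sdiff, Finset.mem_product,
      mem_pairsF, mem_resF, hT, ne_eq]
    constructor
    · rintro ⟨⟨⟨ha, hb⟩, hne⟩, hd⟩
      refine ⟨by simpa using ha, by simpa using hb, fun h => hne ?_, hd⟩
      simp [Finset.mem_filter, Finset.mem_product, ha, hb, h]
    · rintro ⟨ha, hb, hne, hd⟩
      refine ⟨⟨⟨by simpa using ha, by simpa using hb⟩, fun h => ?_⟩, hd⟩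
      exact hne h.2
  rw [Finset.sum_congr rfl (fun x _ => by rw [hfibeq x])] at hfiber
  set A := (Finset.univ : Finset (ZMod p)) \ resF p (quadRes p) with hA
  have huniv : (Finset.univ : Finset (ZMod p)) = resF p (quadRes p) ∪ A := by
    rw [hA, Finset.union_sdiff_of_subset (Finset.subset_univ _)]
  rw [huniv, Finset.sum_union Finset.disjoint_sdiff] at hfiber
  have hpart1 : ∑ x ∈ resF p (quadRes p),
      (pairsF p (quartRes p) x).card = Q * lam := by
    rw [Finset.sum_congr rfl (fun x hx => ?_), Finset.sum_const, smul_eq_mul, hQ]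
    rw [← diffCount_eq_pairsF]
    exact hlam x (by simpa using hx)
  have h0A : (0 : ZMod p) ∈ A := by simp [hA, zero_not_quad]
  have hAcard : A.card = p - Q := by
    rw [hA, Finset.card_sdiff_of_subset (Finset.subset_univ _), Finset.card_univ, ZMod.card]
  have hpart2 : ∑ x ∈ A, (pairsF p (quartRes p) x).card = (p - Q - 1) * mu := by
    rw [← Finset.insert_erase h0A, Finset.sum_insert (Finset.notMem_erase _ _)]
    have hc0 : (pairsF p (quartRes p) (0 : ZMod p)).card = 0 := by
      rw [pairsF_zero]; rfl
    rw [hc0, zero_add]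
    rw [Finset.sum_congr rfl (fun x hx => ?_), Finset.sum_const, smul_eq_mul]
    · rw [Finset.card_erase_of_mem h0A, hAcard]
    · rw [← diffCount_eq_pairsF]
      have hx1 := Finset.mem_erase.mp hx
      refine hmu x hx1.1 ?_
      have := hx1.2
      rw [hA, Finset.mem_sdiff] at this
      simpa using this.2
  rw [hpart1, hpart2] at hfiber
  rw [← hfiber]
  exact hcardbigP

end Aux

/-- Let `p` be a prime of the form `p = 8q + 5` with `q > 0`.  Then
there exist nonnegative integers `λ, μ` with `λ + μ = q` such that the set `R⁽⁴⁾_p` of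
quartic residues is a `(p, (p-1)/4, λ, μ)`-Gaussian difference set for `ZMod p`, and
`R⁽⁴⁾_p ∪ {0}` is a `(p, (p+3)/4, λ+1, μ)`-Gaussian difference set for `ZMod p`. -/
theorem statement16 (p q : ℕ) (hp : p.Prime) (hq : 0 < q) (hpq : p = 8 * q + 5) :
    ∃ lam mu : ℕ, lam + mu = q ∧
      (quartRes p).ncard = (p - 1) / 4 ∧
      IsGaussianDS p (quartRes p) lam mu ∧
      (insert (0 : ZMod p) (quartRes p)).ncard = (p + 3) / 4 ∧
      IsGaussianDS p (insert (0 : ZMod p) (quartRes p)) (lam + 1) mu := by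
  haveI hfact : Fact p.Prime := ⟨hp⟩
  have h5 : p % 8 = 5 := by omega
  have hex : ∃ x₀ : ZMod p, x₀ ≠ 0 ∧ x₀ ∉ quadRes p := by
    classical
    by_contra hcon
    push_neg at hcon
    have hsub : Finset.univ.erase (0 : ZMod p) ⊆ resF p (quadRes p) := by
      intro x hx
      rw [mem_resF]
      exact hcon x (Finset.mem_erase.mp hx).1
    have hle := Finset.card_le_card hsub
    rw [Finset.card_erase_of_mem (Finset.mem_univ _), Finset.card_univ, ZMod.card] at hle
    have hQ2 := card_resF_quad h5
    omega
  obtain ⟨x₀, hx₀0, hx₀⟩ := hex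
  set lam := diffCountSet (quartRes p) 1 with hlamdef
  set mu := diffCountSet (quartRes p) x₀ with hmudef
  have hlam : ∀ x ∈ quadRes p, diffCountSet (quartRes p) x = lam := by
    intro x hx
    have hx0 : x ≠ 0 := fun h => zero_not_quad (h ▸ hx)
    apply key_eq h5 one_ne_zero hx0
    rw [inv_one, mul_one]
    exact (mem_quadRes_iff.mp hx).2
  have hmu : ∀ x : ZMod p, x ≠ 0 → x ∉ quadRes p → diffCountSet (quartRes p) x = mu := by
    intro x hxx hxq
    apply key_eq h5 hx₀0 hxx
    have h1 : ¬ IsSquare x := fun h => hxq (mem_quadRes_iff.mpr ⟨hxx, h⟩)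
    have h2 : ¬ IsSquare (x₀⁻¹ : ZMod p) := by
      rintro ⟨r, hr⟩
      apply hx₀
      refine mem_quadRes_iff.mpr ⟨hx₀0, ⟨r⁻¹, ?_⟩⟩
      rw [← mul_inv, ← hr, inv_inv]
    exact nonsquare_mul_nonsquare hxx (inv_ne_zero hx₀0) h1 h2
  have hN4 := card_resF_quart (p := p) h5
  have hQ2 := card_resF_quad (p := p) h5
  set N := (resF p (quartRes p)).card with hNdef
  set Q := (resF p (quadRes p)).card with hQdef
  have hNval : N = 2 * q + 1 := by omega
  have hQval : Q = 4 * q + 2 := by omega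
  have hsum := sum_counts h5 hlam hmu
  rw [← hNdef, ← hQdef] at hsum
  have hlammu : lam + mu = q := by
    have h3 : (4 * q + 2) * (lam + mu) = (4 * q + 2) * q := by
      rw [Nat.mul_add]
      rw [hNval, hQval, hpq] at hsum
      have e1 : 8 * q + 5 - (4 * q + 2) - 1 = 4 * q + 2 := by omega
      have e2 : (2 * q + 1) * (2 * q + 1) - (2 * q + 1) = (4 * q + 2) * q := by
        have : (2 * q + 1) * (2 * q + 1) = (2 * q + 1) + (4 * q + 2) * q := by ring
        omega
      rw [e1, e2] at hsum
      exact hsum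
    exact Nat.eq_of_mul_eq_mul_left (by omega) h3
  have hsetF : quartRes p = ↑(resF p (quartRes p)) := by
    ext x; simp
  have hncard : (quartRes p).ncard = 2 * q + 1 := by
    rw [hsetF, Set.ncard_coe_finset]
    exact hNval
  refine ⟨lam, mu, hlammu, ?_, ⟨?_, ?_⟩, ?_, ⟨?_, ?_⟩⟩
  · rw [hncard]; omega
  · intro x hx hx0
    rcases Set.mem_insert_iff.mp hx with h | h
    · exact absurd h hx0
    · exact hlam x h
  · intro x hx
    have hx0 : x ≠ 0 := fun h => hx (by rw [h]; exact Set.mem_insert 0 _)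
    have hxq : x ∉ quadRes p := fun h => hx (Set.mem_insert_iff.mpr (Or.inr h))
    exact hmu x hx0 hxq
  · rw [Set.ncard_insert_of_notMem zero_not_quart, hncard]
    omega
  · intro x hx hx0
    rcases Set.mem_insert_iff.mp hx with h | h
    · exact absurd h hx0
    rcases sq_mem_or_neg h5 hx0 (mem_quadRes_iff.mp h).2 with h4 | h4
    · rw [diffCount_eq_pairsF, pairsF_insert_of_mem h5 h4,
        Finset.card_insert_of_notMem xz_not_mem_pairs, ← diffCount_eq_pairsF, hlam x h]
    · have hnx : x ∉ quartRes p := fun hmem => not_both_quart h5 hmem h4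
      rw [diffCount_eq_pairsF, pairsF_insert_of_neg_mem h5 hnx h4,
        Finset.card_insert_of_notMem zx_not_mem_pairs, ← diffCount_eq_pairsF, hlam x h]
  · intro x hx
    have hx0 : x ≠ 0 := fun h => hx (by rw [h]; exact Set.mem_insert 0 _)
    have hxq : x ∉ quadRes p := fun h => hx (Set.mem_insert_iff.mpr (Or.inr h))
    have h1 : x ∉ quartRes p := fun h => hxq (quart_sub_quad h)
    have h2 : -x ∉ quartRes p := by
      intro h
      apply hxq
      have := neg_quart_mem_quad h5 h
      rwa [neg_neg] at this
    rw [diffCount_eq_pairsF, pairsF_insert_of_not_mem hx0 h1 h2, ← diffCount_eq_pairsF]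
    exact hmu x hx0 hxq
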